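/- Positive definiteness of the PDHG metric: let A ∈ ℝ^{m×n}, η > 0, w > 0, and suppose η·‖A‖₂ < 1, where ‖A‖₂ is the spectral norm (largest singular value) of A. Then the symmetric (n+m)×(n+m) block matrix M = [[(w/η)·Iₙ, Aᵀ], [A, (1/(ηw))·Iₘ]] is positive definite. -/

import Mathlib

open BigOperators Matrix

/-- The spectral norm (largest singular value) of a real matrix `A ∈ ℝ^{m×n}`: the operator
norm of the induced linear map between Euclidean spaces. -/
noncomputable def matrixSpectralNorm {m n : ℕ} (A : Matrix (Fin m) (Fin n) ℝ) : ℝ :=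
  ‖LinearMap.toContinuousLinearMap (Matrix.toEuclideanLin A)‖

/-- The PDHG metric matrix `M = [[(w/η)·Iₙ, Aᵀ], [A, (1/(ηw))·Iₘ]]`. -/
noncomputable def pdhgMetric {m n : ℕ} (A : Matrix (Fin m) (Fin n) ℝ) (η w : ℝ) :
    Matrix (Fin n ⊕ Fin m) (Fin n ⊕ Fin m) ℝ :=
  Matrix.fromBlocks ((w / η) • (1 : Matrix (Fin n) (Fin n) ℝ)) Aᵀ
    A ((1 / (η * w)) • (1 : Matrix (Fin m) (Fin m) ℝ))

lemma key_ineq (η w σ a b t : ℝ) (hη : 0 < η) (hw : 0 < w) (hσ : 0 ≤ σ)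
    (hA : η * σ < 1) (ha : 0 ≤ a) (hb : 0 ≤ b) (hab : 0 < a ∨ 0 < b)
    (ht1 : -(σ * a * b) ≤ t) (ht2 : t ≤ σ * a * b) :
    0 < w ^ 2 * a ^ 2 + 2 * (η * w) * t + b ^ 2 := by
  rcases ha.eq_or_lt with ha0 | ha0
  · subst ha0
    have ht0 : t = 0 := le_antisymm (by nlinarith) (by nlinarith)
    have hb0 : 0 < b := by
      rcases hab with h | h
      · exact absurd h (lt_irrefl 0)
      · exact h
    subst ht0; nlinarith [mul_pos hb0 hb0]
  · rcases hb.eq_or_lt with hb0 | hb0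
    · subst hb0
      have ht0 : t = 0 := le_antisymm (by nlinarith) (by nlinarith)
      subst ht0; nlinarith [mul_pos (mul_pos hw hw) (mul_pos ha0 ha0)]
    · nlinarith [sq_nonneg (w * a - b), mul_pos (sub_pos.mpr hA) (mul_pos (mul_pos hw ha0) hb0),
        mul_pos hη hw]

lemma dot_bound {m n : ℕ} (A : Matrix (Fin m) (Fin n) ℝ)
    (u : EuclideanSpace ℝ (Fin n)) (v : EuclideanSpace ℝ (Fin m)) :
    |(WithLp.equiv 2 _ v) ⬝ᵥ (A *ᵥ (WithLp.equiv 2 _ u))| ≤ matrixSpectralNorm A * ‖u‖ * ‖v‖ := by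
  have h1 : (WithLp.equiv 2 _ v) ⬝ᵥ (A *ᵥ (WithLp.equiv 2 _ u))
      = (inner ℝ v (Matrix.toEuclideanLin A u) : ℝ) := by
    rw [Matrix.toEuclideanLin_apply]
    simp [PiLp.inner_apply, dotProduct, mul_comm]
  rw [h1]
  calc |(inner ℝ v (Matrix.toEuclideanLin A u) : ℝ)|
      ≤ ‖v‖ * ‖Matrix.toEuclideanLin A u‖ := abs_real_inner_le_norm _ _
    _ ≤ ‖v‖ * (matrixSpectralNorm A * ‖u‖) := by
        gcongr
        exact (LinearMap.toContinuousLinearMap (Matrix.toEuclideanLin A)).le_opNorm u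
    _ = matrixSpectralNorm A * ‖u‖ * ‖v‖ := by ring

/-- **Positive definiteness of the PDHG metric.**
If `η > 0`, `w > 0` and `η·‖A‖₂ < 1`, then the symmetric block matrix
`M = [[(w/η)·Iₙ, Aᵀ], [A, (1/(ηw))·Iₘ]]` is positive definite. -/
theorem pdhgMetric_posDef {m n : ℕ} (A : Matrix (Fin m) (Fin n) ℝ) (η w : ℝ)
    (hη : 0 < η) (hw : 0 < w) (hA : η * matrixSpectralNorm A < 1) :
    (pdhgMetric A η w).PosDef := by
  have hσ : 0 ≤ matrixSpectralNorm A := norm_nonneg _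
  rw [Matrix.posDef_iff_dotProduct_mulVec]
  constructor
  · unfold pdhgMetric
    refine Matrix.isHermitian_fromBlocks_iff.mpr ⟨?_, ?_, ?_, ?_⟩ <;>
      simp [Matrix.IsHermitian, Matrix.conjTranspose_eq_transpose_of_trivial]
  · intro x hx
    set u : Fin n → ℝ := fun i => x (Sum.inl i) with hu
    set v : Fin m → ℝ := fun i => x (Sum.inr i) with hv
    have hxe : x = Sum.elim u v := by ext i; cases i <;> rfl
    rw [hxe, star_trivial]
    unfold pdhgMetric
    rw [Matrix.fromBlocks_mulVec, sumElim_dotProduct_sumElim]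
    simp only [Sum.elim_comp_inl, Sum.elim_comp_inr]
    have e1 : u ⬝ᵥ (((w / η) • (1 : Matrix (Fin n) (Fin n) ℝ)) *ᵥ u + Aᵀ *ᵥ v)
        = (w / η) * (u ⬝ᵥ u) + v ⬝ᵥ (A *ᵥ u) := by
      rw [dotProduct_add, Matrix.smul_mulVec, Matrix.one_mulVec,
        Matrix.mulVec_transpose, dotProduct_smul, Matrix.dotProduct_mulVec,
        dotProduct_comm]
      simp
      exact dotProduct_comm _ _
    have e2 : v ⬝ᵥ (A *ᵥ u + ((1 / (η * w)) • (1 : Matrix (Fin m) (Fin m) ℝ)) *ᵥ v)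
        = v ⬝ᵥ (A *ᵥ u) + (1 / (η * w)) * (v ⬝ᵥ v) := by
      rw [dotProduct_add, Matrix.smul_mulVec, Matrix.one_mulVec, dotProduct_smul]
      simp
    rw [e1, e2]
    set u' : EuclideanSpace ℝ (Fin n) := (WithLp.equiv 2 _).symm u with hu'
    set v' : EuclideanSpace ℝ (Fin m) := (WithLp.equiv 2 _).symm v with hv'
    have huu : u ⬝ᵥ u = ‖u'‖ ^ 2 := by
      rw [← real_inner_self_eq_norm_sq]
      simp [PiLp.inner_apply, dotProduct, hu']
      rw [EuclideanSpace.real_norm_sq_eq]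
      simp [sq]
    have hvv : v ⬝ᵥ v = ‖v'‖ ^ 2 := by
      rw [← real_inner_self_eq_norm_sq]
      simp [PiLp.inner_apply, dotProduct, hv']
      rw [EuclideanSpace.real_norm_sq_eq]
      simp [sq]
    have ht := dot_bound A u' v'
    simp only [hu', hv', Equiv.apply_symm_apply] at ht
    obtain ⟨ht1, ht2⟩ := abs_le.mp ht
    have hab : 0 < ‖u'‖ ∨ 0 < ‖v'‖ := by
      by_contra hcon
      push_neg at hcon
      obtain ⟨h1, h2⟩ := hcon
      have hu0 : u' = 0 := norm_eq_zero.mp (le_antisymm h1 (norm_nonneg _))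
      have hv0 : v' = 0 := norm_eq_zero.mp (le_antisymm h2 (norm_nonneg _))
      apply hx
      rw [hxe]
      have : u = 0 := by
        have := congrArg (WithLp.equiv 2 (Fin n → ℝ)) hu0
        simpa [hu'] using this
      have hv00 : v = 0 := by
        have := congrArg (WithLp.equiv 2 (Fin m → ℝ)) hv0
        simpa [hv'] using this
      rw [this, hv00]
      ext i; cases i <;> simp
    have key := key_ineq η w (matrixSpectralNorm A) ‖u'‖ ‖v'‖ (v ⬝ᵥ (A *ᵥ u)) hη hw hσ hA
      (norm_nonneg _) (norm_nonneg _) hab ht1 ht2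
    rw [huu, hvv]
    rw [show (w / η) * ‖u'‖ ^ 2 + v ⬝ᵥ (A *ᵥ u) + (v ⬝ᵥ (A *ᵥ u) + 1 / (η * w) * ‖v'‖ ^ 2)
        = (w ^ 2 * ‖u'‖ ^ 2 + 2 * (η * w) * (v ⬝ᵥ (A *ᵥ u)) + ‖v'‖ ^ 2) / (η * w) from by
      field_simp; ring]
    exact div_pos key (mul_pos hη hw)
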